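/- For every positive integer n there exists a completed play of the ordered Zeckendorf game on n of length exactly n − Z(n); together with the lower bound, the shortest possible completed play on n has length exactly n − Z(n). -/

import Mathlib

/-- Fibonacci numbers indexed so that `F 1 = 1`, `F 2 = 2`,
and `F (i+1) = F i + F (i-1)`. -/
def F (i : ℕ) : ℕ := Nat.fib (i + 1)

/-- A single legal move of the ordered Zeckendorf game, acting on an
adjacent pair of entries of the list of indices. -/
inductive Move : List ℕ → List ℕ → Prop
  | merge (a b : List ℕ) (i : ℕ) (hi : 1 ≤ i) :
      Move (a ++ [i, i + 1] ++ b) (a ++ [i + 2] ++ b)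
  | mergeOnes (a b : List ℕ) :
      Move (a ++ [1, 1] ++ b) (a ++ [2] ++ b)
  | split (a b : List ℕ) (i : ℕ) (hi : 2 < i) :
      Move (a ++ [i, i] ++ b) (a ++ [i - 2, i + 1] ++ b)
  | splitTwos (a b : List ℕ) :
      Move (a ++ [2, 2] ++ b) (a ++ [1, 3] ++ b)
  | switch (a b : List ℕ) (i j : ℕ) (hj : 1 ≤ j) (hij : j < i) :
      Move (a ++ [i, j] ++ b) (a ++ [j, i] ++ b)

/-- A play of the ordered Zeckendorf game on `n` with `m` moves:
the initial state is `n` copies of `1`, and each step is a legal move. -/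
def IsPlay (n : ℕ) (s : ℕ → List ℕ) (m : ℕ) : Prop :=
  s 0 = List.replicate n 1 ∧ ∀ t < m, Move (s t) (s (t + 1))

/-- A state is terminal if no legal move applies to it. -/
def Terminal (S : List ℕ) : Prop := ∀ T, ¬ Move S T

/-- The total Fibonacci value of a state. -/
def val (S : List ℕ) : ℕ := (S.map F).sum

/-- The monovariant `f(S) = Σ_{j=1}^k (k+1−j)·F_{i_j}` (here with
`j` running over 0-based positions, so the weight of position `j` is
`k − j`). -/
def f (S : List ℕ) : ℕ := ∑ j : Fin S.length, (S.length - (j : ℕ)) * F (S.get j)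

/-- `M n` is the maximal number of moves in a completed play of the
ordered Zeckendorf game on `n`. -/
noncomputable def M (n : ℕ) : ℕ :=
  sSup {m | ∃ s : ℕ → List ℕ, IsPlay n s m ∧ Terminal (s m)}

/-- The golden ratio `φ = (1+√5)/2`. -/
noncomputable def phi : ℝ := (1 + Real.sqrt 5) / 2

/-- Logarithm to base `φ`. -/
noncomputable def logphi (x : ℝ) : ℝ := Real.log x / Real.log phi

/-! ### Auxiliary lemmas -/

lemma F_pos (i : ℕ) : 1 ≤ F i := Nat.fib_pos.2 i.succ_pos

lemma F_add (i : ℕ) : F (i + 2) = F i + F (i + 1) := Nat.fib_add_two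

lemma val_append (l1 l2 : List ℕ) : val (l1 ++ l2) = val l1 + val l2 := by
  simp [val]

lemma val_move {S T : List ℕ} (h : Move S T) : val T = val S := by
  cases h with
  | merge a b i hi =>
      simp only [val, List.map_append, List.sum_append, List.map_cons, List.map_nil,
        List.sum_cons, List.sum_nil]
      have := F_add i
      omega
  | mergeOnes a b =>
      simp only [val, List.map_append, List.sum_append, List.map_cons, List.map_nil,
        List.sum_cons, List.sum_nil]
      norm_num [F]
  | split a b i hi =>
      obtain ⟨k, rfl⟩ : ∃ k, i = k + 3 := ⟨i - 3, by omega⟩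
      have hs : k + 3 - 2 = k + 1 := by omega
      rw [hs]
      simp only [val, List.map_append, List.sum_append, List.map_cons, List.map_nil,
        List.sum_cons, List.sum_nil]
      have e1 : F (k + 3) = F (k + 1) + F (k + 2) := F_add (k + 1)
      have e2 : F (k + 3 + 1) = F (k + 2) + F (k + 3) := F_add (k + 2)
      omega
  | splitTwos a b =>
      simp only [val, List.map_append, List.sum_append, List.map_cons, List.map_nil,
        List.sum_cons, List.sum_nil]
      norm_num [F]
  | switch a b i j hj hij =>
      simp only [val, List.map_append, List.sum_append, List.map_cons, List.map_nil,
        List.sum_cons, List.sum_nil]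
      omega

lemma pos_move {S T : List ℕ} (h : Move S T) (hp : ∀ x ∈ S, 1 ≤ x) : ∀ x ∈ T, 1 ≤ x := by
  cases h with
  | merge a b i hi =>
      intro x hx
      simp only [List.mem_append, List.mem_cons, List.not_mem_nil, or_false] at hx
      rcases hx with (h | h) | h
      · exact hp x (by simp [h])
      · omega
      · exact hp x (by simp [h])
  | mergeOnes a b =>
      intro x hx
      simp only [List.mem_append, List.mem_cons, List.not_mem_nil, or_false] at hx
      rcases hx with (h | h) | h
      · exact hp x (by simp [h])
      · omega
      · exact hp x (by simp [h])
  | split a b i hi =>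
      intro x hx
      simp only [List.mem_append, List.mem_cons, List.not_mem_nil, or_false] at hx
      rcases hx with (h | h | h) | h
      · exact hp x (by simp [h])
      · omega
      · omega
      · exact hp x (by simp [h])
  | splitTwos a b =>
      intro x hx
      simp only [List.mem_append, List.mem_cons, List.not_mem_nil, or_false] at hx
      rcases hx with (h | h | h) | h
      · exact hp x (by simp [h])
      · omega
      · omega
      · exact hp x (by simp [h])
  | switch a b i j hj hij =>
      intro x hx
      simp only [List.mem_append, List.mem_cons, List.not_mem_nil, or_false] at hx
      rcases hx with (h | h | h) | h
      · exact hp x (by simp [h])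
      · omega
      · omega
      · exact hp x (by simp [h])

lemma len_move {S T : List ℕ} (h : Move S T) : S.length ≤ T.length + 1 := by
  cases h <;> simp [List.length_append] <;> omega

lemma chain'_pair_of_infix {R : ℕ → ℕ → Prop} {a b : List ℕ} {x y : ℕ}
    (h : List.Chain' R (a ++ [x, y] ++ b)) : R x y := by
  have hinf : [x, y] <:+: (a ++ [x, y] ++ b) := ⟨a, b, rfl⟩
  exact List.isChain_pair.1 (List.IsChain.infix h hinf)

lemma terminal_of_chain (L : List ℕ) (hgap : List.Chain' (fun a b => a + 2 ≤ b) L) :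
    Terminal L := by
  intro T hT
  cases hT with
  | merge a b i hi => have := chain'_pair_of_infix hgap; omega
  | mergeOnes a b => have := chain'_pair_of_infix hgap; omega
  | split a b i hi => have := chain'_pair_of_infix hgap; omega
  | splitTwos a b => have := chain'_pair_of_infix hgap; omega
  | switch a b i j hj hij => have := chain'_pair_of_infix hgap; omega

lemma chain_of_terminal_aux :
    ∀ (S pre : List ℕ), (∀ x ∈ S, 1 ≤ x) → (∀ T, ¬ Move (pre ++ S) T) →
      List.Chain' (fun a b => a + 2 ≤ b) S := by
  intro S
  induction S with
  | nil => exact fun _ _ _ => List.isChain_nil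
  | cons x S' ih =>
    intro pre hpos hterm
    cases S' with
    | nil => exact List.isChain_singleton _
    | cons y S'' =>
      have hx : 1 ≤ x := hpos x (by simp)
      have hy : 1 ≤ y := hpos y (by simp)
      have hxy : x + 2 ≤ y := by
        by_contra hc
        rcases lt_trichotomy x y with h | h | h
        · have hyx : y = x + 1 := by omega
          subst hyx
          have hm := Move.merge pre S'' x hx
          simp only [List.append_assoc, List.cons_append, List.nil_append] at hm
          exact hterm _ hm
        · subst h
          rcases Nat.lt_or_ge 2 x with h2 | h2
          · have hm := Move.split pre S'' x h2
            simp only [List.append_assoc, List.cons_append, List.nil_append] at hm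
            exact hterm _ hm
          · rcases Nat.lt_or_ge 1 x with h1 | h1
            · have hx2 : x = 2 := by omega
              subst hx2
              have hm := Move.splitTwos pre S''
              simp only [List.append_assoc, List.cons_append, List.nil_append] at hm
              exact hterm _ hm
            · have hx1 : x = 1 := by omega
              subst hx1
              have hm := Move.mergeOnes pre S''
              simp only [List.append_assoc, List.cons_append, List.nil_append] at hm
              exact hterm _ hm
        · have hm := Move.switch pre S'' x y hy h
          simp only [List.append_assoc, List.cons_append, List.nil_append] at hm
          exact hterm _ hm
      refine List.isChain_cons_cons.2 ⟨hxy, ?_⟩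
      refine ih (pre ++ [x]) (fun z hz => hpos z (List.mem_cons_of_mem _ hz)) ?_
      intro T hT
      apply hterm T
      have heq : pre ++ x :: y :: S'' = (pre ++ [x]) ++ y :: S'' := by simp
      rw [heq]
      exact hT

lemma chain_of_terminal (S : List ℕ) (hpos : ∀ x ∈ S, 1 ≤ x) (hterm : Terminal S) :
    List.Chain' (fun a b => a + 2 ≤ b) S :=
  chain_of_terminal_aux S [] hpos (by simpa [Terminal] using hterm)

/-! ### Zeckendorf uniqueness -/

lemma zeck_eq (L : List ℕ) (hpos : ∀ x ∈ L, 1 ≤ x)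
    (hgap : List.Chain' (fun a b => a + 2 ≤ b) L) :
    Nat.zeckendorf (val L) = (L.map (· + 1)).reverse := by
  have hrep : List.IsZeckendorfRep ((L.map (· + 1)).reverse) := by
    unfold List.IsZeckendorfRep
    have heq : (L.map (· + 1)).reverse ++ [0] = (0 :: L.map (· + 1)).reverse := by simp
    rw [heq, List.isChain_reverse]
    have : List.Chain' (fun a b => a + 2 ≤ b) (0 :: L.map (· + 1)) := by
      refine List.isChain_cons.2 ⟨?_, ?_⟩
      · intro y hy
        cases L with
        | nil => simp at hy
        | cons c L' =>
            simp only [List.map_cons, List.head?_cons, Option.mem_def, Option.some.injEq] at hy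
            have := hpos c (by simp)
            omega
      · rw [List.isChain_map]
        exact List.IsChain.imp (fun a b hab => by omega) hgap
    exact List.IsChain.imp (fun a b hab => by omega) this
  have hsum : (((L.map (· + 1)).reverse).map Nat.fib).sum = val L := by
    simp only [List.map_reverse, List.map_map, List.sum_reverse]
    rfl
  rw [← hsum]
  exact Nat.zeckendorf_sum_fib hrep

lemma zeck_unique (L L' : List ℕ) (hpos : ∀ x ∈ L, 1 ≤ x) (hpos' : ∀ x ∈ L', 1 ≤ x)
    (hgap : List.Chain' (fun a b => a + 2 ≤ b) L)
    (hgap' : List.Chain' (fun a b => a + 2 ≤ b) L') (hv : val L = val L') : L = L' := by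
  have h1 := zeck_eq L hpos hgap
  have h2 := zeck_eq L' hpos' hgap'
  rw [hv, h2] at h1
  have h3 : L.map (· + 1) = L'.map (· + 1) := by
    have := congrArg List.reverse h1.symm
    simpa using this
  exact List.map_injective_iff.2 (fun a b hab => by omega) h3

/-! ### Reachability -/

def Reach (m : ℕ) (S T : List ℕ) : Prop :=
  ∃ s : ℕ → List ℕ, s 0 = S ∧ s m = T ∧ ∀ t < m, Move (s t) (s (t + 1))

lemma Reach.refl (S : List ℕ) : Reach 0 S S :=
  ⟨fun _ => S, rfl, rfl, fun t ht => absurd ht (Nat.not_lt_zero t)⟩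

lemma Reach.single {S T : List ℕ} (h : Move S T) : Reach 1 S T := by
  refine ⟨fun t => if t = 0 then S else T, by simp, by simp, ?_⟩
  intro t ht
  have : t = 0 := by omega
  subst this
  simpa using h

lemma Reach.trans {m m' : ℕ} {S T U : List ℕ} (h1 : Reach m S T) (h2 : Reach m' T U) :
    Reach (m + m') S U := by
  obtain ⟨s1, h10, h1m, h1mov⟩ := h1
  obtain ⟨s2, h20, h2m, h2mov⟩ := h2
  refine ⟨fun t => if t < m then s1 t else s2 (t - m), ?_, ?_, ?_⟩
  · by_cases h : 0 < m
    · simp [h, h10]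
    · have hm0 : m = 0 := by omega
      subst hm0
      simp only [Nat.lt_irrefl, if_neg, Nat.sub_zero, if_false]
      rw [h20, ← h1m, h10]
  · have hnl : ¬ (m + m' < m) := by omega
    simp only [hnl, if_false]
    rw [show m + m' - m = m' from by omega, h2m]
  · intro t ht
    by_cases h1lt : t + 1 < m
    · have htm : t < m := by omega
      simp only [if_pos htm, if_pos h1lt]
      exact h1mov t htm
    · by_cases h2lt : t < m
      · have hteq : t + 1 = m := by omega
        simp only [if_pos h2lt, if_neg h1lt]
        rw [show t + 1 - m = 0 from by omega, h20, ← h1m, ← hteq]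
        exact h1mov t h2lt
      · simp only [if_neg h2lt, if_neg h1lt]
        rw [show t + 1 - m = t - m + 1 from by omega]
        exact h2mov (t - m) (by omega)

lemma move_ctx {S T : List ℕ} (c d : List ℕ) (h : Move S T) :
    Move (c ++ S ++ d) (c ++ T ++ d) := by
  cases h with
  | merge a b i hi =>
      have := Move.merge (c ++ a) (b ++ d) i hi
      simpa [List.append_assoc] using this
  | mergeOnes a b =>
      have := Move.mergeOnes (c ++ a) (b ++ d)
      simpa [List.append_assoc] using this
  | split a b i hi =>
      have := Move.split (c ++ a) (b ++ d) i hi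
      simpa [List.append_assoc] using this
  | splitTwos a b =>
      have := Move.splitTwos (c ++ a) (b ++ d)
      simpa [List.append_assoc] using this
  | switch a b i j hj hij =>
      have := Move.switch (c ++ a) (b ++ d) i j hj hij
      simpa [List.append_assoc] using this

lemma Reach.ctx {m : ℕ} {S T : List ℕ} (c d : List ℕ) (h : Reach m S T) :
    Reach m (c ++ S ++ d) (c ++ T ++ d) := by
  obtain ⟨s, h0, hm, hmov⟩ := h
  refine ⟨fun t => c ++ s t ++ d, ?_, ?_, fun t ht => move_ctx c d (hmov t ht)⟩
  · show c ++ s 0 ++ d = c ++ S ++ d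
    rw [h0]
  · show c ++ s m ++ d = c ++ T ++ d
    rw [hm]

lemma build (i : ℕ) : 1 ≤ i → Reach (F i - 1) (List.replicate (F i) 1) [i] := by
  induction i using Nat.strong_induction_on with
  | _ i ih =>
    intro hi
    match i, hi with
    | 1, _ =>
        have hF : F 1 = 1 := rfl
        rw [hF]
        simpa using Reach.refl [1]
    | 2, _ =>
        have hF : F 2 = 2 := rfl
        rw [hF]
        have hm : Move [1, 1] [2] := by simpa using Move.mergeOnes [] []
        simpa using Reach.single hm
    | (k + 3), _ =>
        have h1 := ih (k + 1) (by omega) (by omega)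
        have h2 := ih (k + 2) (by omega) (by omega)
        have hF : F (k + 3) = F (k + 1) + F (k + 2) := F_add (k + 1)
        have hp1 := F_pos (k + 1)
        have hp2 := F_pos (k + 2)
        have r1 : Reach (F (k + 1) - 1)
            (List.replicate (F (k + 1)) 1 ++ List.replicate (F (k + 2)) 1)
            ([k + 1] ++ List.replicate (F (k + 2)) 1) := by
          simpa using h1.ctx [] (List.replicate (F (k + 2)) 1)
        have r2 : Reach (F (k + 2) - 1)
            ([k + 1] ++ List.replicate (F (k + 2)) 1) [k + 1, k + 2] := by
          simpa using h2.ctx [k + 1] []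
        have r3 : Reach 1 [k + 1, k + 2] [k + 3] := by
          have hm := Move.merge ([] : List ℕ) ([] : List ℕ) (k + 1) (by omega)
          simp only [List.nil_append, List.append_nil] at hm
          exact Reach.single (show Move [k + 1, k + 1 + 1] [k + 1 + 2] from hm)
        have rt := (r1.trans r2).trans r3
        have hrep : List.replicate (F (k + 3)) 1
            = List.replicate (F (k + 1)) 1 ++ List.replicate (F (k + 2)) 1 := by
          rw [hF, List.replicate_add]
        have hcnt : F (k + 1) - 1 + (F (k + 2) - 1) + 1 = F (k + 3) - 1 := by omega
        rw [hrep, ← hcnt]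
        exact rt

lemma len_le_val (L : List ℕ) : L.length ≤ val L := by
  induction L with
  | nil => simp [val]
  | cons i L' ih =>
      have := F_pos i
      simp only [val, List.map_cons, List.sum_cons, List.length_cons]
      simp only [val] at ih
      omega

lemma buildL (L : List ℕ) (hpos : ∀ x ∈ L, 1 ≤ x) :
    Reach (val L - L.length) (List.replicate (val L) 1) L := by
  induction L with
  | nil => simpa [val] using Reach.refl []
  | cons i L' ih =>
      have hi : 1 ≤ i := hpos i (by simp)
      have h1 := build i hi
      have h2 := ih (fun x hx => hpos x (List.mem_cons_of_mem _ hx))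
      have hpF := F_pos i
      have hlen := len_le_val L'
      have r1 : Reach (F i - 1)
          (List.replicate (F i) 1 ++ List.replicate (val L') 1)
          ([i] ++ List.replicate (val L') 1) := by
        simpa using h1.ctx [] (List.replicate (val L') 1)
      have r2 : Reach (val L' - L'.length) ([i] ++ List.replicate (val L') 1) (i :: L') := by
        simpa using h2.ctx [i] []
      have rt := r1.trans r2
      have hv : val (i :: L') = F i + val L' := by simp [val]
      have hrep : List.replicate (val (i :: L')) 1
          = List.replicate (F i) 1 ++ List.replicate (val L') 1 := by
        rw [hv, List.replicate_add]
      have hcnt : F i - 1 + (val L' - L'.length) = val (i :: L') - (i :: L').length := by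
        simp only [hv, List.length_cons]
        omega
      rw [hrep, ← hcnt]
      exact rt

theorem stmt_12 (n : ℕ) (hn : 1 ≤ n) (L : List ℕ)
    (hpos : ∀ x ∈ L, 1 ≤ x)
    (hgap : List.Chain' (fun a b => a + 2 ≤ b) L)
    (hsum : val L = n) :
    (∃ s : ℕ → List ℕ, IsPlay n s (n - L.length) ∧ Terminal (s (n - L.length))) ∧
    (∀ (s : ℕ → List ℕ) (m : ℕ), IsPlay n s m → Terminal (s m) → n - L.length ≤ m) := by
  constructor
  · have hr := buildL L hpos
    rw [hsum] at hr
    obtain ⟨s, h0, hm, hmov⟩ := hr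
    exact ⟨s, ⟨h0, hmov⟩, by rw [hm]; exact terminal_of_chain L hgap⟩
  · intro s m ⟨h0, hmov⟩ hterm
    have key : ∀ t, t ≤ m →
        val (s t) = n ∧ (∀ x ∈ s t, 1 ≤ x) ∧ n ≤ (s t).length + t := by
      intro t
      induction t with
      | zero =>
          intro _
          rw [h0]
          refine ⟨?_, ?_, ?_⟩
          · simp [val, F]
          · intro x hx
            simp only [List.mem_replicate] at hx
            omega
          · simp
      | succ t iht =>
          intro ht
          obtain ⟨hv, hp, hl⟩ := iht (by omega)
          have hmv := hmov t (by omega)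
          refine ⟨by rw [val_move hmv, hv], pos_move hmv hp, ?_⟩
          have := len_move hmv
          omega
    obtain ⟨hv, hp, hl⟩ := key m le_rfl
    have hch := chain_of_terminal (s m) hp hterm
    have heq : L = s m := zeck_unique L (s m) hpos hp hgap hch (by rw [hv, hsum])
    rw [heq]
    omega
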